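/- Define the Carlitz q-Fibonacci polynomials S_n(x,q)_0 by the recurrence S_n(x,q)_0 = x S_{n-1}(x,q)_0 + q^{n-2} S_{n-2}(x,q)_0 with S_0(x,q)_0 = 0 and S_1(x,q)_0 = 1. Then for all n ≥ 0, S_{n+1}(x,q)_0 = ∑_{j ≥ 0} qbinom(n-j, j)_q * q^{j^2} * x^{n-2j}. -/

import Mathlib

open Finset Polynomial

/-- The q-Pochhammer symbol `(a;q)_n = ∏_{i=1}^{n} (1 - a q^{i-1})`. -/
noncomputable def qPoch (a q : RatFunc ℚ) (n : ℕ) : RatFunc ℚ :=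
  ∏ i ∈ Finset.range n, (1 - a * q ^ i)

/-- The q-binomial coefficient `qbinom(n,m)_q = (q;q)_n / ((q;q)_{n-m} (q;q)_m)`
for `n ≥ m ≥ 0`, and `0` otherwise. -/
noncomputable def qbinom (q : RatFunc ℚ) (n m : ℤ) : RatFunc ℚ :=
  if 0 ≤ m ∧ m ≤ n then
    qPoch q q n.toNat / (qPoch q q (n - m).toNat * qPoch q q m.toNat)
  else 0

/-- The indeterminate `q`, realized as the generator of the field of rational functions. -/
noncomputable def qvar : RatFunc ℚ := RatFunc.X

/-- The Carlitz q-Fibonacci polynomials `S_n(x,q)₀`, with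
`S₀ = 0`, `S₁ = 1` and `S_n = x S_{n-1} + q^{n-2} S_{n-2}`, viewed as polynomials in `x`
over the field `ℚ(q)`. -/
noncomputable def qFib0 : ℕ → Polynomial (RatFunc ℚ)
  | 0 => 0
  | 1 => 1
  | (n + 2) => Polynomial.X * qFib0 (n + 1) + Polynomial.C (qvar ^ n) * qFib0 n

lemma one_sub_qpow_ne (i : ℕ) : (1 : RatFunc ℚ) - qvar * qvar ^ i ≠ 0 := by
  intro h
  have h2 : (qvar : RatFunc ℚ) ^ (i+1) = 1 := by
    have := sub_eq_zero.mp h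
    rw [pow_succ']; exact this.symm
  have h3 : (Polynomial.X : Polynomial ℚ) ^ (i+1) = 1 := by
    apply RatFunc.algebraMap_injective ℚ
    rw [map_pow, map_one, RatFunc.algebraMap_X]
    exact h2
  have := congrArg Polynomial.natDegree h3
  simp [Polynomial.natDegree_X_pow] at this

lemma qPoch_ne (n : ℕ) : qPoch qvar qvar n ≠ 0 :=
  Finset.prod_ne_zero_iff.mpr fun i _ => one_sub_qpow_ne i

lemma qPoch_succ (n : ℕ) : qPoch qvar qvar (n+1) = qPoch qvar qvar n * (1 - qvar * qvar ^ n) :=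
  Finset.prod_range_succ _ n

lemma qbinom_of_neg {a b : ℤ} (h : ¬(0 ≤ b ∧ b ≤ a)) (q : RatFunc ℚ) : qbinom q a b = 0 := by
  rw [qbinom, if_neg h]

lemma qbinom_self (n : ℕ) : qbinom qvar n n = 1 := by
  rw [qbinom, if_pos ⟨Int.natCast_nonneg n, le_refl _⟩]
  simp [qPoch, div_self (qPoch_ne n)]
  exact qPoch_ne n

lemma qbinom_zero (n : ℕ) : qbinom qvar n 0 = 1 := by
  rw [qbinom, if_pos ⟨le_refl _, Int.natCast_nonneg n⟩]
  simp [qPoch]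
  exact qPoch_ne n

lemma pascal (m k : ℕ) :
    qbinom qvar (m+1 : ℕ) (k+1 : ℕ) =
      qbinom qvar m (k+1 : ℕ) + qvar ^ (m - k) * qbinom qvar m k := by
  rcases lt_trichotomy k m with hk | rfl | hk
  · obtain ⟨d, rfl⟩ : ∃ d, m = k + d + 1 := ⟨m - k - 1, by omega⟩
    rw [qbinom, if_pos ⟨by positivity, by push_cast; omega⟩,
        qbinom, if_pos ⟨by positivity, by push_cast; omega⟩,
        qbinom, if_pos ⟨by positivity, by push_cast; omega⟩]
    have e1 : ((k + d + 1 + 1 : ℕ) : ℤ).toNat = k + d + 2 := by push_cast; omega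
    have e2 : (((k + d + 1 + 1 : ℕ) : ℤ) - ((k+1 : ℕ) : ℤ)).toNat = d + 1 := by push_cast; omega
    have e3 : (((k + 1 : ℕ)) : ℤ).toNat = k + 1 := by omega
    have e4 : ((k + d + 1 : ℕ) : ℤ).toNat = k + d + 1 := by omega
    have e5 : (((k + d + 1 : ℕ) : ℤ) - ((k+1 : ℕ) : ℤ)).toNat = d := by push_cast; omega
    have e6 : (((k + d + 1 : ℕ) : ℤ) - ((k : ℕ) : ℤ)).toNat = d + 1 := by push_cast; omega
    have e7 : ((k : ℕ) : ℤ).toNat = k := by omega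
    rw [e1, e2, e3, e4, e5, e6, e7]
    have e8 : k + d + 1 - k = d + 1 := by omega
    rw [e8, qPoch_succ (k+d+1), qPoch_succ d, qPoch_succ k]
    have h1 := qPoch_ne (k+d+1)
    have h2 := qPoch_ne d
    have h3 := qPoch_ne k
    have h4 := one_sub_qpow_ne d
    have h5 := one_sub_qpow_ne k
    field_simp
    ring
  · rw [Nat.sub_self, pow_zero, one_mul, qbinom_self k]
    have hz : qbinom qvar (k : ℤ) ((k+1 : ℕ) : ℤ) = 0 := qbinom_of_neg (by push_cast; omega) _
    rw [hz, zero_add]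
    exact qbinom_self (k+1)
  · rw [qbinom_of_neg (by push_cast; omega), qbinom_of_neg (by push_cast; omega),
        qbinom_of_neg (by push_cast; omega)]
    simp

lemma term_step (n j : ℕ) :
    C (qbinom qvar (((n:ℤ)+2) - ((j:ℤ)+1)) ((j:ℤ)+1) * qvar ^ ((j+1) ^ 2)) *
        (X : Polynomial (RatFunc ℚ)) ^ (n + 2 - 2 * (j+1))
      = X * (C (qbinom qvar (((n:ℤ)+1) - ((j:ℤ)+1)) ((j:ℤ)+1) * qvar ^ ((j+1) ^ 2)) *
          X ^ (n + 1 - 2 * (j+1)))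
      + C (qvar ^ (n+1)) *
          (C (qbinom qvar ((n:ℤ) - (j:ℤ)) (j:ℤ) * qvar ^ (j ^ 2)) * X ^ (n - 2*j)) := by
  rcases lt_trichotomy (2*j) n with h | h | h
  · obtain ⟨d, rfl⟩ : ∃ d, n = 2*j + d + 1 := ⟨n - 2*j - 1, by omega⟩
    have e1 : ((2*j+d+1 : ℕ) : ℤ) + 2 - ((j:ℤ)+1) = ((j + d + 1 + 1 : ℕ) : ℤ) := by
      push_cast; ring
    have e2 : ((2*j+d+1 : ℕ) : ℤ) + 1 - ((j:ℤ)+1) = ((j + d + 1 : ℕ) : ℤ) := by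
      push_cast; ring
    have e3 : ((2*j+d+1 : ℕ) : ℤ) - (j:ℤ) = ((j + d + 1 : ℕ) : ℤ) := by push_cast; ring
    have e4 : ((j:ℤ)+1) = ((j + 1 : ℕ) : ℤ) := by push_cast; ring
    have e5 : 2*j+d+1 + 2 - 2*(j+1) = d + 1 := by omega
    have e6 : 2*j+d+1 + 1 - 2*(j+1) = d := by omega
    have e7 : 2*j+d+1 - 2*j = d + 1 := by omega
    have e8 : (j : ℤ) = ((j : ℕ) : ℤ) := rfl
    rw [e1, e2, e3, e4, e5, e6, e7, pascal (j+d+1) j]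
    have e9 : j + d + 1 - j = d + 1 := by omega
    rw [e9]
    simp only [map_mul, map_add, map_pow, add_mul]
    ring
  · obtain rfl : n = 2*j := h.symm
    have e1 : ((2*j : ℕ) : ℤ) + 2 - ((j:ℤ)+1) = ((j+1 : ℕ) : ℤ) := by push_cast; ring
    have e2 : ((2*j : ℕ) : ℤ) - (j:ℤ) = ((j : ℕ) : ℤ) := by push_cast; ring
    have e4 : ((j:ℤ)+1) = ((j + 1 : ℕ) : ℤ) := by push_cast; ring
    have e5 : 2*j + 2 - 2*(j+1) = 0 := by omega
    have e7 : 2*j - 2*j = 0 := by omega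
    have hz : qbinom qvar (((2*j : ℕ):ℤ) + 1 - ((j:ℤ)+1)) ((j:ℤ)+1) = 0 :=
      qbinom_of_neg (by omega) _
    rw [hz, e1, e2, e4, e5, e7, qbinom_self (j+1), qbinom_self j]
    simp only [map_mul, map_add, map_pow, map_one, pow_zero, mul_one, one_mul,
      mul_zero, zero_mul, map_zero, add_zero, zero_add]
    ring
  · have z1 : qbinom qvar (((n:ℕ):ℤ) + 2 - ((j:ℤ)+1)) ((j:ℤ)+1) = 0 :=
      qbinom_of_neg (by omega) _
    have z2 : qbinom qvar (((n:ℕ):ℤ) + 1 - ((j:ℤ)+1)) ((j:ℤ)+1) = 0 :=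
      qbinom_of_neg (by omega) _
    have z3 : qbinom qvar ((n:ℤ) - (j:ℤ)) ((j:ℤ)) = 0 :=
      qbinom_of_neg (by omega) _
    rw [z1, z2, z3]
    simp

/-- `S_{n+1}(x,q)₀ = ∑_{j ≥ 0} qbinom(n-j,j)_q q^{j²} x^{n-2j}`. -/
theorem qFib0_closed_form (n : ℕ) :
    qFib0 (n + 1) =
      ∑ j ∈ Finset.range (n + 1),
        Polynomial.C (qbinom qvar ((n : ℤ) - j) (j : ℤ) * qvar ^ (j ^ 2)) *
          Polynomial.X ^ (n - 2 * j) := by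
  have key : ∀ m : ℕ, (qFib0 (m + 1) =
      ∑ j ∈ Finset.range (m + 1),
        C (qbinom qvar ((m : ℤ) - j) (j : ℤ) * qvar ^ (j ^ 2)) * X ^ (m - 2 * j)) ∧
      (qFib0 (m + 2) =
      ∑ j ∈ Finset.range (m + 2),
        C (qbinom qvar ((m + 1 : ℕ) - j : ℤ) (j : ℤ) * qvar ^ (j ^ 2)) * X ^ (m + 1 - 2 * j)) := by
    intro m
    induction m with
    | zero =>
      have b0 : qbinom qvar (0:ℤ) (0:ℤ) = 1 := by
        have := qbinom_zero 0; push_cast at this; exact this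
      have b1 : qbinom qvar (1:ℤ) (0:ℤ) = 1 := by
        have := qbinom_zero 1; push_cast at this; exact this
      have b2 : qbinom qvar (0:ℤ) (1:ℤ) = 0 := qbinom_of_neg (by omega) _
      constructor
      · simp [qFib0, Finset.sum_range_one, b0]
      · rw [show qFib0 2 = X * qFib0 1 + C (qvar ^ 0) * qFib0 0 from rfl]
        rw [Finset.sum_range_succ, Finset.sum_range_one]
        simp [qFib0, b1, b2]
    | succ k ih =>
      refine ⟨ih.2, ?_⟩
      show qFib0 (k+3) = ∑ j ∈ Finset.range (k+3),
        C (qbinom qvar (((k+2 : ℕ) : ℤ) - (j : ℤ)) (j : ℤ) * qvar ^ (j ^ 2)) * X ^ (k+2 - 2*j)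
      have hrec : qFib0 (k + 3) = X * qFib0 (k + 2) + C (qvar ^ (k+1)) * qFib0 (k + 1) := rfl
      rw [hrec, ih.2, ih.1, Finset.mul_sum, Finset.mul_sum]
      set F : ℕ → Polynomial (RatFunc ℚ) := fun j =>
        C (qbinom qvar (((k+2 : ℕ) : ℤ) - (j : ℤ)) (j : ℤ) * qvar ^ (j ^ 2)) * X ^ (k+2 - 2*j)
        with hF
      set G : ℕ → Polynomial (RatFunc ℚ) := fun j =>
        X * (C (qbinom qvar (((k+1 : ℕ) : ℤ) - (j : ℤ)) (j : ℤ) * qvar ^ (j ^ 2)) *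
          X ^ (k+1 - 2*j)) with hGdef
      set H : ℕ → Polynomial (RatFunc ℚ) := fun j =>
        C (qvar ^ (k+1)) * (C (qbinom qvar (((k : ℕ) : ℤ) - (j : ℤ)) (j : ℤ) * qvar ^ (j ^ 2)) *
          X ^ (k - 2*j)) with hHdef
      have hL : (∑ j ∈ Finset.range (k+3), F j)
          = (∑ j ∈ Finset.range (k+2), F (j+1)) + F 0 := Finset.sum_range_succ' F (k+2)
      have hGtop : G (k+2) = 0 := by
        have hz : qbinom qvar (((k+1 : ℕ) : ℤ) - ((k+2 : ℕ) : ℤ)) ((k+2 : ℕ) : ℤ) = 0 :=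
          qbinom_of_neg (by push_cast; omega) _
        simp only [hGdef, hz, zero_mul, mul_zero, map_zero]
      have hXG : (∑ j ∈ Finset.range (k+2), G j)
          = (∑ j ∈ Finset.range (k+2), G (j+1)) + G 0 := by
        have h1 : (∑ j ∈ Finset.range (k+3), G j)
            = (∑ j ∈ Finset.range (k+2), G (j+1)) + G 0 := Finset.sum_range_succ' G (k+2)
        have h2 : (∑ j ∈ Finset.range (k+3), G j)
            = (∑ j ∈ Finset.range (k+2), G j) + G (k+2) := Finset.sum_range_succ G (k+2)
        rw [hGtop, add_zero] at h2
        rw [← h2, h1]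
      have hHtop : H (k+1) = 0 := by
        have hz : qbinom qvar (((k : ℕ) : ℤ) - ((k+1 : ℕ) : ℤ)) ((k+1 : ℕ) : ℤ) = 0 :=
          qbinom_of_neg (by push_cast; omega) _
        simp only [hHdef, hz, zero_mul, mul_zero, map_zero]
      have hHext : (∑ j ∈ Finset.range (k+2), H j) = ∑ j ∈ Finset.range (k+1), H j := by
        rw [Finset.sum_range_succ, hHtop, add_zero]
      rw [hL, hXG, ← hHext, add_right_comm, ← Finset.sum_add_distrib]
      congr 1
      · refine Finset.sum_congr rfl fun j _ => ?_
        simp only [hF, hGdef, hHdef]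
        push_cast
        exact (term_step k j).symm
      · simp only [hF, hGdef, Nat.cast_zero, Nat.cast_ofNat, sub_zero, Nat.mul_zero,
          Nat.sub_zero, mul_zero, qbinom_zero, pow_zero, map_one, one_mul, mul_one]
        ring
  exact (key n).1
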